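/- Let φ be a strictly convex norm on ℝⁿ, K ⊆ ℝⁿ closed, and 1 < λ < ∞. Then there exists a modulus ω_λ : (0,∞) → [0,∞) with ω_λ(t) → 0 as t → 0⁺ such that φ(a − b) ≤ δ_K^φ(x) · ω_λ(φ(x − y)/δ_K^φ(x)) whenever x satisfies ρ_K^φ(x) ≥ λ, y ∈ ℝⁿ, a ∈ ξ_K^φ(x), and b ∈ ξ_K^φ(y). -/

import Mathlib

open Set Filter Metric MeasureTheory Topology ENNReal

noncomputable section

abbrev Euc (n : ℕ) := EuclideanSpace ℝ (Fin n)

def IsNorm {n : ℕ} (φ : Euc n → ℝ) : Prop :=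
  (∀ x, φ x = 0 ↔ x = 0) ∧ (∀ (c : ℝ) (x : Euc n), φ (c • x) = |c| * φ x) ∧
    (∀ x y, φ (x + y) ≤ φ x + φ y)

def StrictlyConvexNorm {n : ℕ} (φ : Euc n → ℝ) : Prop :=
  IsNorm φ ∧ ∀ a b, φ (a + b) = φ a + φ b → φ b • a = φ a • b

def UniformlyConvexNorm {n : ℕ} (φ : Euc n → ℝ) : Prop :=
  IsNorm φ ∧ ∃ γ : ℝ, 0 < γ ∧ ConvexOn ℝ Set.univ (fun x => φ x - γ * ‖x‖)

def distφ {n : ℕ} (φ : Euc n → ℝ) (K : Set (Euc n)) (x : Euc n) : ℝ :=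
  sInf {r | ∃ y ∈ K, r = φ (x - y)}

def nearφ {n : ℕ} (φ : Euc n → ℝ) (K : Set (Euc n)) (x : Euc n) : Set (Euc n) :=
  {a ∈ K | φ (x - a) = distφ φ K x}

def rhoφ {n : ℕ} (φ : Euc n → ℝ) (K : Set (Euc n)) (x : Euc n) : ℝ≥0∞ :=
  sSup {r : ℝ≥0∞ | ∃ s : ℝ, ∃ a ∈ nearφ φ K x,
    r = ENNReal.ofReal s ∧ distφ φ K (a + s • (x - a)) = s * distφ φ K x}

def normalBundle {n : ℕ} (φ : Euc n → ℝ) (K : Set (Euc n)) : Set (Euc n × Euc n) :=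
  {p | p.1 ∈ K ∧ φ p.2 = 1 ∧ ∃ s : ℝ, 0 < s ∧ distφ φ K (p.1 + s • p.2) = s}

def reachφ {n : ℕ} (φ : Euc n → ℝ) (K : Set (Euc n)) (p : Euc n × Euc n) : ℝ≥0∞ :=
  sSup {r : ℝ≥0∞ | ∃ s : ℝ, 0 < s ∧ r = ENNReal.ofReal s ∧ distφ φ K (p.1 + s • p.2) = s}

def cutLocus {n : ℕ} (φ : Euc n → ℝ) (K : Set (Euc n)) : Set (Euc n) :=
  {x | ∃ p ∈ normalBundle φ K, reachφ φ K p ≠ ⊤ ∧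
    x = p.1 + (reachφ φ K p).toReal • p.2}

def PtTwiceDiffAt {n : ℕ} (f : Euc n → ℝ) (x : Euc n) : Prop :=
  ∃ (L : Euc n →L[ℝ] ℝ) (Q : Euc n →L[ℝ] Euc n →L[ℝ] ℝ),
    Tendsto (fun y => |f y - f x - L (y - x) - Q (y - x) (y - x)| / ‖y - x‖ ^ 2)
      (𝓝[≠] x) (𝓝 0)

section basics
variable {n : ℕ} {φ : Euc n → ℝ} (hn : IsNorm φ)

include hn in
lemma phi_zero : φ 0 = 0 := (hn.1 0).mpr rfl

include hn in
lemma phi_neg (x : Euc n) : φ (-x) = φ x := by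
  have := hn.2.1 (-1) x
  simpa using this

include hn in
lemma phi_nonneg (x : Euc n) : 0 ≤ φ x := by
  have h := hn.2.2 x (-x)
  rw [add_neg_cancel, phi_zero hn, phi_neg hn] at h
  linarith

include hn in
lemma phi_sub_le (x y z : Euc n) : φ (x - z) ≤ φ (x - y) + φ (y - z) := by
  have := hn.2.2 (x - y) (y - z)
  simpa using this

include hn in
lemma phi_sub_comm (x y : Euc n) : φ (x - y) = φ (y - x) := by
  rw [← phi_neg hn (x - y)]; congr 1; abel

lemma abs_apply_le_norm (x : Euc n) (i : Fin n) : |x i| ≤ ‖x‖ := by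
  rw [EuclideanSpace.norm_eq]
  rw [← Real.sqrt_sq_eq_abs]
  apply Real.sqrt_le_sqrt
  have : |x i| ^ 2 ≤ ∑ j, ‖x j‖ ^ 2 := by
    have := Finset.single_le_sum (f := fun j => ‖x j‖ ^ 2)
      (fun j _ => sq_nonneg _) (Finset.mem_univ i)
    simpa [Real.norm_eq_abs, sq_abs] using this
  simpa [sq_abs] using this

include hn in
/-- upper bound by Euclidean norm -/
lemma phi_exists_upper : ∃ C : ℝ, 0 < C ∧ ∀ x, φ x ≤ C * ‖x‖ := by
  classical
  set e : Fin n → Euc n := fun i => EuclideanSpace.single i (1:ℝ) with he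
  refine ⟨(∑ i, φ (e i)) + 1, ?_, ?_⟩
  · have : 0 ≤ ∑ i, φ (e i) := Finset.sum_nonneg fun i _ => phi_nonneg hn _
    linarith
  · intro x
    have hx : ∑ i, x i • e i = x := by
      have := (EuclideanSpace.basisFun (Fin n) ℝ).sum_repr x
      simpa [he] using this
    calc φ x = φ (∑ i, x i • e i) := by rw [hx]
      _ ≤ ∑ i, φ (x i • e i) :=
          Finset.le_sum_of_subadditive φ (phi_zero hn).le hn.2.2 _ _
      _ = ∑ i, |x i| * φ (e i) := by simp [hn.2.1]
      _ ≤ ∑ i, ‖x‖ * φ (e i) := by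
          refine Finset.sum_le_sum fun i _ => ?_
          exact mul_le_mul_of_nonneg_right (abs_apply_le_norm x i) (phi_nonneg hn _)
      _ = (∑ i, φ (e i)) * ‖x‖ := by rw [Finset.sum_mul]; exact Finset.sum_congr rfl fun i _ => mul_comm _ _
      _ ≤ ((∑ i, φ (e i)) + 1) * ‖x‖ := by
          have : (0:ℝ) ≤ ‖x‖ := norm_nonneg _
          nlinarith

include hn in
lemma phi_continuous : Continuous φ := by
  obtain ⟨C, hC, hle⟩ := phi_exists_upper hn
  have hlip : LipschitzWith (Real.toNNReal C) φ := by
    refine LipschitzWith.of_dist_le_mul fun x y => ?_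
    have h1 : φ x ≤ φ (x - y) + φ y := by
      have := hn.2.2 (x - y) y; simpa [sub_add_cancel] using this
    have h2 : φ y ≤ φ (y - x) + φ x := by
      have := hn.2.2 (y - x) x; simpa [sub_add_cancel] using this
    have h3 : φ (x - y) = φ (y - x) := phi_sub_comm hn x y
    have : |φ x - φ y| ≤ φ (x - y) := abs_sub_le_iff.mpr ⟨by linarith, by linarith⟩
    calc dist (φ x) (φ y) = |φ x - φ y| := Real.dist_eq _ _
      _ ≤ φ (x - y) := this
      _ ≤ C * ‖x - y‖ := hle _
      _ = (Real.toNNReal C) * dist x y := by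
          rw [dist_eq_norm, Real.coe_toNNReal C hC.le]
  exact hlip.continuous

include hn in
lemma phi_exists_lower : ∃ c : ℝ, 0 < c ∧ ∀ x, c * ‖x‖ ≤ φ x := by
  rcases subsingleton_or_nontrivial (Euc n) with hsub | hnt
  · exact ⟨1, one_pos, fun x => by
      have : x = 0 := Subsingleton.elim x 0
      simp [this, phi_zero hn]⟩
  · have hsph : (sphere (0 : Euc n) 1).Nonempty :=
      NormedSpace.sphere_nonempty.mpr one_pos.le
    have hcpt : IsCompact (sphere (0 : Euc n) 1) := isCompact_sphere 0 1
    obtain ⟨z, hz, hmin⟩ := hcpt.exists_isMinOn hsph (phi_continuous hn).continuousOn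
    have hz1 : ‖z‖ = 1 := by simpa using hz
    have hzpos : 0 < φ z := by
      rcases (phi_nonneg hn z).lt_or_eq with h | h
      · exact h
      · exfalso
        have : z = 0 := (hn.1 z).mp h.symm
        rw [this] at hz1; simp at hz1
    refine ⟨φ z, hzpos, fun x => ?_⟩
    rcases eq_or_ne x 0 with rfl | hx
    · simp [phi_zero hn]
    · have hxn : (0:ℝ) < ‖x‖ := norm_pos_iff.mpr hx
      have hmem : (‖x‖⁻¹ • x) ∈ sphere (0 : Euc n) 1 := by
        simp [norm_smul, abs_of_pos (inv_pos.mpr hxn), inv_mul_cancel₀ hxn.ne']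
      have h2 : φ (‖x‖⁻¹ • x) = ‖x‖⁻¹ * φ x := by
        rw [hn.2.1]; rw [abs_of_pos (inv_pos.mpr hxn)]
      have this : φ z ≤ ‖x‖⁻¹ * φ x := h2 ▸ hmin hmem
      calc φ z * ‖x‖ ≤ (‖x‖⁻¹ * φ x) * ‖x‖ := by
            exact mul_le_mul_of_nonneg_right this hxn.le
        _ = φ x := by field_simp

end basics

section dist
variable {n : ℕ} {φ : Euc n → ℝ} (hn : IsNorm φ) {K : Set (Euc n)}

include hn in
lemma distφ_nonneg (x : Euc n) : 0 ≤ distφ φ K x :=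
  Real.sInf_nonneg (by rintro r ⟨y, hy, rfl⟩; exact phi_nonneg hn _)

include hn in
lemma distφ_le {b : Euc n} (hb : b ∈ K) (x : Euc n) : distφ φ K x ≤ φ (x - b) :=
  csInf_le ⟨0, by rintro r ⟨y, hy, rfl⟩; exact phi_nonneg hn _⟩ ⟨b, hb, rfl⟩

include hn in
lemma distφ_pos (hK : IsClosed K) {a x : Euc n} (ha : a ∈ K) (hx : x ∉ K) :
    0 < distφ φ K x := by
  obtain ⟨c, hc, hlow⟩ := phi_exists_lower hn
  have hne : K.Nonempty := ⟨a, ha⟩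
  have hinf : 0 < infDist x K := (hK.notMem_iff_infDist_pos hne).mp hx
  have : c * infDist x K ≤ distφ φ K x := by
    refine le_csInf ⟨φ (x - a), ⟨a, ha, rfl⟩⟩ ?_
    rintro r ⟨y, hy, rfl⟩
    calc c * infDist x K ≤ c * dist x y :=
          mul_le_mul_of_nonneg_left (infDist_le_dist_of_mem hy) hc.le
      _ ≤ φ (x - y) := by rw [dist_eq_norm]; exact hlow _
  nlinarith

/-- Uniqueness of nearest point when a point beyond `x` projects at distance `s·d`, `s>1`. -/
lemma near_unique (hφ : StrictlyConvexNorm φ) (hd : 0 < distφ φ K x)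
    {s : ℝ} {a' : Euc n} (hs : 1 < s) (ha' : a' ∈ nearφ φ K x)
    (hss : distφ φ K (a' + s • (x - a')) = s * distφ φ K x) :
    ∀ a ∈ nearφ φ K x, a = a' := by
  intro a ha
  have hn' := hφ.1
  set d := distφ φ K x with hdd
  set x' := a' + s • (x - a') with hx'
  have hp : x' - x = (s - 1) • (x - a') := by
    rw [hx']; module
  have hφp : φ (x' - x) = (s - 1) * d := by
    rw [hp, hn'.2.1, abs_of_pos (by linarith), ha'.2]
  have h1 : s * d ≤ φ (x' - a) := hss ▸ distφ_le hn' ha.1 x'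
  have h2 : φ (x' - a) ≤ φ (x' - x) + φ (x - a) := phi_sub_le hn' _ _ _
  have h3 : φ (x' - a) ≤ s * d := by
    rw [hφp, ha.2, ← hdd] at h2; linarith
  have heq : φ ((x' - x) + (x - a)) = φ (x' - x) + φ (x - a) := by
    have : (x' - x) + (x - a) = x' - a := by abel
    rw [this, hφp, ha.2, ← hdd]
    linarith
  have hsc := hφ.2 _ _ heq
  rw [hφp, ha.2, ← hdd, hp] at hsc
  have : d • ((s - 1) • (x - a')) = ((s-1)*d) • (x - a) := hsc
  rw [smul_smul] at this
  have hne : d * (s - 1) ≠ 0 := by nlinarith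
  have hxx : x - a' = x - a := by
    have h4 : (d * (s-1)) • (x - a') = (d * (s-1)) • (x - a) := by
      rw [this]; ring_nf
    exact smul_right_injective _ hne h4
  have := sub_right_injective hxx
  rw [this]

end dist

section modulus
variable {n : ℕ}

def modSet (φ : Euc n → ℝ) (δ : ℝ) : Set ℝ :=
  insert 0 {r | ∃ u v : Euc n, φ u = 1 ∧ φ v = 1 ∧ 2 - δ ≤ φ (u + v) ∧ r = φ (u - v)}

def modφ (φ : Euc n → ℝ) (δ : ℝ) : ℝ := sSup (modSet φ δ)

variable {φ : Euc n → ℝ} (hn : IsNorm φ)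

include hn in
lemma modSet_bddAbove (δ : ℝ) : ∀ r ∈ modSet φ δ, r ≤ 2 := by
  rintro r (rfl | ⟨u, v, hu, hv, _, rfl⟩)
  · norm_num
  · have h := hn.2.2 u (-v)
    rw [phi_neg hn] at h
    have : u + -v = u - v := by abel
    rw [this, hu, hv] at h; linarith

include hn in
lemma modφ_nonneg (δ : ℝ) : 0 ≤ modφ φ δ :=
  le_csSup ⟨2, fun r hr => modSet_bddAbove hn δ r hr⟩ (Set.mem_insert 0 _)

include hn in
lemma modφ_le_two (δ : ℝ) : modφ φ δ ≤ 2 :=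
  csSup_le ⟨0, Set.mem_insert 0 _⟩ (modSet_bddAbove hn δ)

include hn in
lemma modφ_mono {δ₁ δ₂ : ℝ} (h : δ₁ ≤ δ₂) : modφ φ δ₁ ≤ modφ φ δ₂ := by
  apply csSup_le_csSup ⟨2, fun r hr => modSet_bddAbove hn δ₂ r hr⟩ ⟨0, Set.mem_insert 0 _⟩
  rintro r (rfl | ⟨u, v, hu, hv, hsum, rfl⟩)
  · exact Set.mem_insert 0 _
  · exact Set.mem_insert_of_mem _ ⟨u, v, hu, hv, by linarith, rfl⟩

include hn in
lemma le_modφ {δ : ℝ} {u v : Euc n} (hu : φ u = 1) (hv : φ v = 1)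
    (hsum : 2 - δ ≤ φ (u + v)) : φ (u - v) ≤ modφ φ δ :=
  le_csSup ⟨2, fun r hr => modSet_bddAbove hn δ r hr⟩
    (Set.mem_insert_of_mem _ ⟨u, v, hu, hv, hsum, rfl⟩)

lemma modφ_small (hφ : StrictlyConvexNorm φ) :
    ∀ ε : ℝ, 0 < ε → ∃ δ : ℝ, 0 < δ ∧ modφ φ δ ≤ ε := by
  have hn' := hφ.1
  by_contra hcon
  push_neg at hcon
  obtain ⟨ε, hε, hmod⟩ := hcon
  -- for every k, there are u v on the sphere with φ(u+v) ≥ 2 - 1/(k+1) and φ(u-v) > ε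
  have hseq : ∀ k : ℕ, ∃ u v : Euc n, φ u = 1 ∧ φ v = 1 ∧
      2 - 1/(k+1 : ℝ) ≤ φ (u + v) ∧ ε < φ (u - v) := by
    intro k
    have hk : (0:ℝ) < 1/(k+1 : ℝ) := by positivity
    have := hmod (1/(k+1:ℝ)) hk
    obtain ⟨r, hr, hrε⟩ := exists_lt_of_lt_csSup ⟨0, Set.mem_insert 0 _⟩ this
    rcases Set.mem_insert_iff.mp hr with rfl | ⟨u, v, hu, hv, hsum, rfl⟩
    · exact absurd hrε (not_lt.mpr hε.le)
    · exact ⟨u, v, hu, hv, hsum, hrε⟩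
  choose u v hu hv hsum hdiff using hseq
  -- compactness of the φ-sphere
  obtain ⟨c, hc, hlow⟩ := phi_exists_lower hn'
  have hsph : IsCompact {z : Euc n | φ z = 1} := by
    apply Metric.isCompact_of_isClosed_isBounded
    · exact isClosed_eq (phi_continuous hn') continuous_const
    · apply Metric.isBounded_iff_subset_closedBall (0 : Euc n) |>.mpr
      refine ⟨1/c, fun z hz => ?_⟩
      have h1 : c * ‖z‖ ≤ 1 := by
        calc c * ‖z‖ ≤ φ z := hlow z
          _ = 1 := hz
      simp only [Metric.mem_closedBall, dist_zero_right]
      rw [le_div_iff₀ hc, mul_comm]; exact h1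
  have hprod : IsCompact ({z : Euc n | φ z = 1} ×ˢ {z : Euc n | φ z = 1}) := hsph.prod hsph
  have hmem : ∀ k, (u k, v k) ∈ ({z : Euc n | φ z = 1} ×ˢ {z : Euc n | φ z = 1}) :=
    fun k => ⟨hu k, hv k⟩
  obtain ⟨⟨U, V⟩, hUV, ψ, hψ, hlim⟩ := hprod.tendsto_subseq hmem
  have hlimU : Tendsto (fun k => u (ψ k)) atTop (𝓝 U) :=
    (continuous_fst.tendsto _).comp hlim
  have hlimV : Tendsto (fun k => v (ψ k)) atTop (𝓝 V) :=
    (continuous_snd.tendsto _).comp hlim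
  have hφU : φ U = 1 := hUV.1
  have hφV : φ V = 1 := hUV.2
  have hcont := phi_continuous hn'
  -- φ (U + V) ≥ 2
  have hsumlim : Tendsto (fun k => φ (u (ψ k) + v (ψ k))) atTop (𝓝 (φ (U + V))) :=
    (hcont.tendsto _).comp (hlimU.add hlimV)
  have honelim : Tendsto (fun k => 2 - 1/((ψ k : ℝ)+1)) atTop (𝓝 2) := by
    have h1 : Tendsto (fun k => ((ψ k : ℝ) + 1)) atTop atTop := by
      apply tendsto_atTop_add_const_right
      exact tendsto_natCast_atTop_atTop.comp hψ.tendsto_atTop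
    have := h1.inv_tendsto_atTop
    have h2 : Tendsto (fun k => 2 - 1/((ψ k : ℝ)+1)) atTop (𝓝 (2 - 0)) := by
      apply Filter.Tendsto.sub tendsto_const_nhds
      simp only [one_div]; exact this
    simpa using h2
  have hge2 : 2 ≤ φ (U + V) :=
    le_of_tendsto_of_tendsto' honelim hsumlim (fun k => hsum (ψ k))
  have heq : φ (U + V) = φ U + φ V := by
    have hle : φ (U + V) ≤ φ U + φ V := hn'.2.2 U V
    rw [hφU, hφV] at hle ⊢; linarith
  have hUV2 := hφ.2 U V heq
  rw [hφU, hφV, one_smul, one_smul] at hUV2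
  -- but φ (U - V) ≥ ε > 0
  have hdifflim : Tendsto (fun k => φ (u (ψ k) - v (ψ k))) atTop (𝓝 (φ (U - V))) :=
    (hcont.tendsto _).comp (hlimU.sub hlimV)
  have hgeε : ε ≤ φ (U - V) :=
    le_of_tendsto_of_tendsto' tendsto_const_nhds hdifflim (fun k => (hdiff (ψ k)).le)
  rw [hUV2] at hgeε
  simp [phi_zero hn'] at hgeε
  linarith

lemma modφ_tendsto (hφ : StrictlyConvexNorm φ) :
    Tendsto (modφ φ) (𝓝[>] (0:ℝ)) (𝓝 0) := by
  rw [Metric.tendsto_nhdsWithin_nhds]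
  intro ε hε
  obtain ⟨δ, hδ, hsmall⟩ := modφ_small hφ (ε/2) (by linarith)
  refine ⟨δ, hδ, fun {t} ht hd => ?_⟩
  have h1 : 0 < t := ht
  have h2 : |t| < δ := by rwa [Real.dist_eq, sub_zero] at hd
  have h3 : t ≤ δ := (le_abs_self t).trans h2.le
  have h4 : modφ φ t ≤ ε/2 := (modφ_mono hφ.1 h3).trans hsmall
  rw [Real.dist_eq, sub_zero, abs_of_nonneg (modφ_nonneg hφ.1 t)]
  linarith

end modulus


set_option maxHeartbeats 1000000 in
theorem stmt10 {n : ℕ} (φ : Euc n → ℝ) (hφ : StrictlyConvexNorm φ) (K : Set (Euc n))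
    (hK : IsClosed K) (lam : ℝ) (hlam : 1 < lam) :
    ∃ ω : ℝ → ℝ, (∀ t : ℝ, 0 ≤ ω t) ∧ Tendsto ω (𝓝[>] 0) (𝓝 0) ∧
      ∀ (x y a b : Euc n), x ∉ K → ENNReal.ofReal lam ≤ rhoφ φ K x →
        a ∈ nearφ φ K x → b ∈ nearφ φ K y →
        φ (a - b) ≤ distφ φ K x * ω (φ (x - y) / distφ φ K x) := by
  have hn' := hφ.1
  set m : ℝ := min ((lam - 1)/2) 1 with hm
  have hm0 : 0 < m := lt_min (by linarith) one_pos
  refine ⟨fun τ => 2 * max τ 0 + (1 + 2 * max τ 0) * modφ φ (2 * max τ 0 / m), ?_, ?_, ?_⟩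
  · intro τ
    have h1 : (0:ℝ) ≤ max τ 0 := le_max_right _ _
    have h2 := modφ_nonneg hn' (2 * max τ 0 / m)
    nlinarith
  · -- the modulus tends to 0
    have hmax_eq : ∀ᶠ τ in 𝓝[>](0:ℝ), max τ 0 = τ :=
      eventually_nhdsWithin_of_forall (fun τ (hτ : 0 < τ) => max_eq_left hτ.le)
    have harg : Tendsto (fun τ : ℝ => 2 * max τ 0 / m) (𝓝[>](0:ℝ)) (𝓝[>] (0:ℝ)) := by
      rw [tendsto_nhdsWithin_iff]
      constructor
      · have hbase : Tendsto (fun τ : ℝ => 2 * τ / m) (𝓝[>](0:ℝ)) (𝓝 (2 * 0 / m)) :=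
          ((tendsto_id.const_mul 2).div_const m).mono_left nhdsWithin_le_nhds
        rw [show (2:ℝ) * 0 / m = 0 by ring] at hbase
        apply hbase.congr'
        filter_upwards [hmax_eq] with τ hτ
        rw [hτ]
      · filter_upwards [self_mem_nhdsWithin] with τ (hτ : 0 < τ)
        have : max τ 0 = τ := max_eq_left hτ.le
        rw [Set.mem_Ioi, this]
        positivity
    have hmodt : Tendsto (fun τ => modφ φ (2 * max τ 0 / m)) (𝓝[>](0:ℝ)) (𝓝 0) :=
      (modφ_tendsto hφ).comp harg
    have h2max : Tendsto (fun τ : ℝ => 2 * max τ 0) (𝓝[>](0:ℝ)) (𝓝 0) := by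
      have hbase : Tendsto (fun τ : ℝ => 2 * τ) (𝓝[>](0:ℝ)) (𝓝 (2 * 0)) :=
        (tendsto_id.const_mul 2).mono_left nhdsWithin_le_nhds
      rw [mul_zero] at hbase
      apply hbase.congr'
      filter_upwards [hmax_eq] with τ hτ
      rw [hτ]
    have hfin : Tendsto (fun τ : ℝ => 2 * max τ 0 + (1 + 2 * max τ 0) * modφ φ (2 * max τ 0 / m))
        (𝓝[>](0:ℝ)) (𝓝 (0 + (1 + 0) * 0)) :=
      h2max.add (((tendsto_const_nhds (x := (1:ℝ))).add h2max).mul hmodt)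
    simpa using hfin
  · intro x y a b hx hrho ha hb
    set d := distφ φ K x with hd
    have hdpos : 0 < d := distφ_pos hn' hK ha.1 hx
    set t := φ (x - y) with ht
    have htnn : 0 ≤ t := phi_nonneg hn' _
    -- extract s > μ > 1 with the reach property
    set μ := (1 + lam)/2 with hμ
    have hμ1 : 1 < μ := by rw [hμ]; linarith
    have hμlam : μ < lam := by rw [hμ]; linarith
    have hlt : ENNReal.ofReal μ < rhoφ φ K x :=
      lt_of_lt_of_le ((ENNReal.ofReal_lt_ofReal_iff (by linarith)).mpr hμlam) hrho
    obtain ⟨r, hrS, hμr⟩ := lt_sSup_iff.mp hlt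
    obtain ⟨s, a', ha', rfl, hprop⟩ := hrS
    have hμs : μ < s := by
      by_contra hcon
      push_neg at hcon
      exact absurd (ENNReal.ofReal_le_ofReal hcon) (not_le.mpr hμr)
    have hs1 : 1 < s := hμ1.trans hμs
    have haa' : a = a' := near_unique hφ hdpos hs1 ha' hprop a ha
    rw [← haa'] at hprop
    -- set up geometry
    have hxa : φ (x - a) = d := ha.2
    set x' := a + s • (x - a) with hx'
    have hx'x : x' - x = (s - 1) • (x - a) := by rw [hx']; module
    have hφp : φ (x' - x) = (s - 1) * d := by
      rw [hx'x, hn'.2.1, abs_of_pos (by linarith : (0:ℝ) < s - 1), hxa]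
    have hdy : distφ φ K y ≤ t + d := by
      calc distφ φ K y ≤ φ (y - a) := distφ_le hn' ha.1 y
        _ ≤ φ (y - x) + φ (x - a) := phi_sub_le hn' _ _ _
        _ = t + d := by rw [phi_sub_comm hn' y x, ← ht, hxa]
    have hqle : φ (x - b) ≤ d + 2*t := by
      calc φ (x - b) ≤ φ (x - y) + φ (y - b) := phi_sub_le hn' _ _ _
        _ = t + distφ φ K y := by rw [← ht, hb.2]
        _ ≤ t + (t + d) := by linarith
        _ = d + 2*t := by ring
    have hx'b : s * d ≤ φ (x' - b) := by
      calc s * d = distφ φ K x' := hprop.symm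
        _ ≤ φ (x' - b) := distφ_le hn' hb.1 x'
    have hqge : d ≤ φ (x - b) := by
      have h2 : φ (x' - b) ≤ φ (x' - x) + φ (x - b) := phi_sub_le hn' _ _ _
      rw [hφp] at h2
      nlinarith
    have hqpos : 0 < φ (x - b) := lt_of_lt_of_le hdpos hqge
    -- unit vectors
    set u := d⁻¹ • (x - a) with hu
    set v := (φ (x - b))⁻¹ • (x - b) with hv
    have hφu : φ u = 1 := by
      rw [hu, hn'.2.1, abs_of_pos (inv_pos.mpr hdpos), hxa]
      field_simp
    have hφv : φ v = 1 := by
      rw [hv, hn'.2.1, abs_of_pos (inv_pos.mpr hqpos)]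
      field_simp
    have hdu : d • u = x - a := by
      rw [hu, smul_smul, mul_inv_cancel₀ hdpos.ne', one_smul]
    have hqv : (φ (x - b)) • v = x - b := by
      rw [hv, smul_smul, mul_inv_cancel₀ hqpos.ne', one_smul]
    -- near-equality in the triangle inequality
    set γ := min ((s-1)*d) (φ (x - b)) with hγ
    have hγpos : 0 < γ := lt_min (by nlinarith) hqpos
    have hγ1 : γ ≤ (s-1)*d := min_le_left _ _
    have hγ2 : γ ≤ φ (x - b) := min_le_right _ _
    have hγm : m * d ≤ γ := by
      rw [hγ]
      apply le_min
      · have h1 : m ≤ (lam-1)/2 := min_le_left _ _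
        have h2 : (lam-1)/2 ≤ s - 1 := by rw [hμ] at hμs; linarith
        nlinarith
      · have h1 : m ≤ 1 := min_le_right _ _
        nlinarith
    have hdecomp : x' - b = γ • (u + v) + (((s-1)*d) - γ) • u + ((φ (x - b)) - γ) • v := by
      have h1 : ((s-1)*d) • u = x' - x := by
        calc ((s-1)*d) • u = (s-1) • (d • u) := (smul_smul (s-1) d u).symm
          _ = (s-1) • (x - a) := by rw [hdu]
          _ = x' - x := hx'x.symm
      calc x' - b = ((s-1)*d) • u + (φ (x - b)) • v := by rw [h1, hqv]; abel
        _ = γ • (u + v) + (((s-1)*d) - γ) • u + ((φ (x - b)) - γ) • v := by module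
    have htineq : φ (x' - b) ≤ γ * φ (u + v) + (((s-1)*d) - γ) + ((φ (x - b)) - γ) := by
      calc φ (x' - b)
          ≤ φ (γ • (u + v) + (((s-1)*d) - γ) • u) + φ (((φ (x - b)) - γ) • v) := by
            rw [hdecomp]; exact hn'.2.2 _ _
        _ ≤ φ (γ • (u + v)) + φ ((((s-1)*d) - γ) • u) + φ (((φ (x - b)) - γ) • v) := by
            have := hn'.2.2 (γ • (u + v)) ((((s-1)*d) - γ) • u)
            linarith
        _ = γ * φ (u + v) + (((s-1)*d) - γ) + ((φ (x - b)) - γ) := by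
            have e1 : φ (γ • (u + v)) = γ * φ (u + v) := by
              rw [hn'.2.1, abs_of_pos hγpos]
            have e2 : φ ((((s-1)*d) - γ) • u) = ((s-1)*d) - γ := by
              rw [hn'.2.1, hφu, mul_one, abs_of_nonneg (by linarith : (0:ℝ) ≤ (s-1)*d - γ)]
            have e3 : φ (((φ (x - b)) - γ) • v) = (φ (x - b)) - γ := by
              rw [hn'.2.1, hφv, mul_one, abs_of_nonneg (by linarith : (0:ℝ) ≤ φ (x - b) - γ)]
            rw [e1, e2, e3]
    have hsumlow : 2 - 2*t/(m*d) ≤ φ (u + v) := by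
      have hA : s * d ≤ γ * φ (u + v) + (((s-1)*d) - γ) + ((φ (x - b)) - γ) :=
        hx'b.trans htineq
      have h2 : 2*γ - 2*t ≤ γ * φ (u + v) := by nlinarith
      have h4 : (2*γ - 2*t)/γ ≤ φ (u + v) := by
        rw [div_le_iff₀ hγpos]; nlinarith
      have h5 : (2*γ - 2*t)/γ = 2 - 2*t/γ := by field_simp
      have h6 : 2*t/γ ≤ 2*t/(m*d) := by
        exact div_le_div_of_nonneg_left (by positivity) (by positivity) hγm
      linarith
    have hEφ : φ (u - v) ≤ modφ φ (2*t/(m*d)) := le_modφ hn' hφu hφv hsumlow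
    -- conclusion
    have habd : a - b = (φ (x - b)) • (v - u) + ((φ (x - b)) - d) • u := by
      calc a - b = (x - b) - (x - a) := by abel
        _ = (φ (x - b)) • v - d • u := by rw [hdu, hqv]
        _ = (φ (x - b)) • (v - u) + ((φ (x - b)) - d) • u := by module
    have hfinal : φ (a - b) ≤ (φ (x - b)) * φ (v - u) + ((φ (x - b)) - d) := by
      calc φ (a - b) ≤ φ ((φ (x - b)) • (v - u)) + φ (((φ (x - b)) - d) • u) := by
            rw [habd]; exact hn'.2.2 _ _
        _ = (φ (x - b)) * φ (v - u) + ((φ (x - b)) - d) := by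
            rw [hn'.2.1, hn'.2.1, hφu, abs_of_pos hqpos,
              abs_of_nonneg (by linarith : (0:ℝ) ≤ φ (x - b) - d)]
            ring
    have hvu : φ (v - u) = φ (u - v) := phi_sub_comm hn' v u
    rw [hvu] at hfinal
    -- identify the right-hand side
    have hmax : max (t/d) 0 = t/d := max_eq_left (by positivity)
    have hargeq : 2 * (t/d) / m = 2*t/(m*d) := by
      rw [mul_comm m d, ← div_div, ← mul_div_assoc]
    have hrhs : d * (2 * max (t/d) 0 + (1 + 2 * max (t/d) 0) * modφ φ (2 * max (t/d) 0 / m))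
        = 2*t + (d + 2*t) * modφ φ (2*t/(m*d)) := by
      rw [hmax, hargeq]
      field_simp [hdpos.ne']
    rw [hrhs]
    have hmodnn : 0 ≤ modφ φ (2*t/(m*d)) := modφ_nonneg hn' _
    nlinarith [hfinal, hEφ, hqle, hqge]
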